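/- Let X be a real Banach space that is midpoint locally uniformly rotund (MLUR), and let x, y ∈ X with x ≠ y. Then for every r with 0 < r < ‖x − y‖, the diameter of B_X(x, r + 1/n) ∩ B_X(y, ‖x − y‖ − r + 1/n) tends to 0 as n → ∞, where B_X(c, s) denotes the closed ball in X with center c and radius s. -/

import Mathlib

open Filter

/-- `X` is midpoint locally uniformly rotund (MLUR). -/
def MLUR (X : Type*) [NormedAddCommGroup X] [NormedSpace ℝ X] : Prop :=
  ∀ (x y : ℕ → X) (z : X),
    Tendsto (fun n => ‖x n‖) atTop (nhds 1) →
    Tendsto (fun n => ‖y n‖) atTop (nhds 1) →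
    Tendsto (fun n => (1 / 2 : ℝ) • (x n + y n)) atTop (nhds z) → ‖z‖ = 1 →
    Tendsto (fun n => ‖x n - y n‖) atTop (nhds 0)

theorem mlur_diam_ball_intersection_tendsto_zero (X : Type*) [NormedAddCommGroup X]
    [NormedSpace ℝ X] [CompleteSpace X] (hX : MLUR X)
    (x y : X) (hxy : x ≠ y) (r : ℝ) (hr0 : 0 < r) (hr : r < ‖x - y‖) :
    Tendsto (fun n : ℕ => Metric.diam
        (Metric.closedBall x (r + 1 / (n : ℝ)) ∩
          Metric.closedBall y (‖x - y‖ - r + 1 / (n : ℝ))))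
      atTop (nhds 0) := by
  set d : ℝ := ‖x - y‖ with hd
  have hd0 : 0 < d := lt_trans hr0 hr
  set S : ℕ → Set X := fun n =>
    Metric.closedBall x (r + 1 / (n : ℝ)) ∩ Metric.closedBall y (d - r + 1 / (n : ℝ)) with hS
  by_contra hcon
  -- extract ε and a frequently-large subsequence
  rw [Metric.tendsto_atTop] at hcon
  push_neg at hcon
  obtain ⟨ε, hε, hfreq⟩ := hcon
  have hfreq' : ∃ᶠ n in atTop, ε ≤ Metric.diam (S n) := by
    rw [frequently_atTop]
    intro N
    obtain ⟨n, hn, hdist⟩ := hfreq N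
    refine ⟨n, hn, ?_⟩
    rw [Real.dist_eq, sub_zero, abs_of_nonneg Metric.diam_nonneg] at hdist
    exact hdist
  obtain ⟨φ, hφmono, hφ⟩ := Filter.extraction_of_frequently_atTop hfreq'
  -- choose far-apart pairs
  have key : ∀ k, ∃ u ∈ S (φ k), ∃ v ∈ S (φ k), ε / 2 < dist u v := by
    intro k
    by_contra hk
    push_neg at hk
    have : Metric.diam (S (φ k)) ≤ ε / 2 :=
      Metric.diam_le_of_forall_dist_le (by linarith) fun u hu v hv => hk u hu v hv
    linarith [hφ k]
  choose u hu v hv huv using key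
  have hux : ∀ k, ‖u k - x‖ ≤ r + 1 / (φ k : ℝ) := fun k => by
    have := (hu k).1; rwa [Metric.mem_closedBall, dist_eq_norm] at this
  have huy : ∀ k, ‖u k - y‖ ≤ d - r + 1 / (φ k : ℝ) := fun k => by
    have := (hu k).2; rwa [Metric.mem_closedBall, dist_eq_norm] at this
  have hvx : ∀ k, ‖v k - x‖ ≤ r + 1 / (φ k : ℝ) := fun k => by
    have := (hv k).1; rwa [Metric.mem_closedBall, dist_eq_norm] at this
  have hvy : ∀ k, ‖v k - y‖ ≤ d - r + 1 / (φ k : ℝ) := fun k => by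
    have := (hv k).2; rwa [Metric.mem_closedBall, dist_eq_norm] at this
  set w : ℕ → X := fun k => (d⁻¹ : ℝ) • (u k - v k + (y - x)) with hw
  set w' : ℕ → X := fun k => (d⁻¹ : ℝ) • (v k - u k + (y - x)) with hw'
  set z : X := (d⁻¹ : ℝ) • (y - x) with hz
  have hzn : ‖z‖ = 1 := by
    rw [hz, norm_smul, Real.norm_eq_abs, abs_of_pos (inv_pos.mpr hd0), norm_sub_rev, ← hd]
    field_simp
  have hinv : ∀ k : ℕ, (0:ℝ) ≤ 1 / (φ k : ℝ) := fun k => by positivity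
  -- upper bounds
  have hwub : ∀ k, ‖w k‖ ≤ 1 + 2 / d * (1 / (φ k : ℝ)) := by
    intro k
    have h1 : ‖u k - v k + (y - x)‖ ≤ ‖u k - x‖ + ‖y - v k‖ := by
      have : u k - v k + (y - x) = (u k - x) + (y - v k) := by abel
      rw [this]; exact norm_add_le _ _
    have h2 : ‖y - v k‖ ≤ d - r + 1 / (φ k : ℝ) := by
      rw [norm_sub_rev]; exact hvy k
    have h3 : ‖u k - v k + (y - x)‖ ≤ d + 2 * (1 / (φ k : ℝ)) := by
      have := hux k; linarith
    calc ‖w k‖ = d⁻¹ * ‖u k - v k + (y - x)‖ := by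
          rw [hw, norm_smul, Real.norm_eq_abs, abs_of_pos (inv_pos.mpr hd0)]
      _ ≤ d⁻¹ * (d + 2 * (1 / (φ k : ℝ))) := by
          exact mul_le_mul_of_nonneg_left h3 (inv_pos.mpr hd0).le
      _ = 1 + 2 / d * (1 / (φ k : ℝ)) := by
          rw [mul_add, inv_mul_cancel₀ hd0.ne']; ring
  have hw'ub : ∀ k, ‖w' k‖ ≤ 1 + 2 / d * (1 / (φ k : ℝ)) := by
    intro k
    have h1 : ‖v k - u k + (y - x)‖ ≤ ‖v k - x‖ + ‖y - u k‖ := by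
      have : v k - u k + (y - x) = (v k - x) + (y - u k) := by abel
      rw [this]; exact norm_add_le _ _
    have h2 : ‖y - u k‖ ≤ d - r + 1 / (φ k : ℝ) := by
      rw [norm_sub_rev]; exact huy k
    have h3 : ‖v k - u k + (y - x)‖ ≤ d + 2 * (1 / (φ k : ℝ)) := by
      have := hvx k; linarith
    calc ‖w' k‖ = d⁻¹ * ‖v k - u k + (y - x)‖ := by
          rw [hw', norm_smul, Real.norm_eq_abs, abs_of_pos (inv_pos.mpr hd0)]
      _ ≤ d⁻¹ * (d + 2 * (1 / (φ k : ℝ))) := by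
          exact mul_le_mul_of_nonneg_left h3 (inv_pos.mpr hd0).le
      _ = 1 + 2 / d * (1 / (φ k : ℝ)) := by
          rw [mul_add, inv_mul_cancel₀ hd0.ne']; ring
  have hsum : ∀ k, w k + w' k = (2:ℝ) • z := by
    intro k
    rw [hw, hw', hz]
    module
  have hwlb : ∀ k, 1 - 2 / d * (1 / (φ k : ℝ)) ≤ ‖w k‖ := by
    intro k
    have h2 : (2:ℝ) = ‖w k + w' k‖ := by
      rw [hsum k, norm_smul, hzn, Real.norm_eq_abs]; norm_num
    have h3 : ‖w k + w' k‖ ≤ ‖w k‖ + ‖w' k‖ := norm_add_le _ _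
    have := hw'ub k
    linarith
  have hw'lb : ∀ k, 1 - 2 / d * (1 / (φ k : ℝ)) ≤ ‖w' k‖ := by
    intro k
    have h2 : (2:ℝ) = ‖w k + w' k‖ := by
      rw [hsum k, norm_smul, hzn, Real.norm_eq_abs]; norm_num
    have h3 : ‖w k + w' k‖ ≤ ‖w k‖ + ‖w' k‖ := norm_add_le _ _
    have := hwub k
    linarith
  -- tendsto facts
  have hφt : Tendsto φ atTop atTop := hφmono.tendsto_atTop
  have h1n : Tendsto (fun k => 1 / (φ k : ℝ)) atTop (nhds 0) :=
    tendsto_one_div_atTop_nhds_zero_nat.comp hφt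
  have hbnd : Tendsto (fun k => 1 + 2 / d * (1 / (φ k : ℝ))) atTop (nhds 1) := by
    have := (h1n.const_mul (2 / d)).const_add 1
    simpa using this
  have hbnd' : Tendsto (fun k => 1 - 2 / d * (1 / (φ k : ℝ))) atTop (nhds 1) := by
    have h := (tendsto_const_nhds : Tendsto (fun _ : ℕ => (1:ℝ)) atTop
      (nhds 1)).sub (h1n.const_mul (2 / d))
    simpa using h
  have hwn : Tendsto (fun k => ‖w k‖) atTop (nhds 1) :=
    tendsto_of_tendsto_of_tendsto_of_le_of_le hbnd' hbnd hwlb hwub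
  have hw'n : Tendsto (fun k => ‖w' k‖) atTop (nhds 1) :=
    tendsto_of_tendsto_of_tendsto_of_le_of_le hbnd' hbnd hw'lb hw'ub
  have hmid : Tendsto (fun k => (1 / 2 : ℝ) • (w k + w' k)) atTop (nhds z) := by
    have : (fun k => (1 / 2 : ℝ) • (w k + w' k)) = fun _ => z := by
      funext k; rw [hsum k, smul_smul]; norm_num
    rw [this]; exact tendsto_const_nhds
  have hmain := hX w w' z hwn hw'n hmid hzn
  -- w k - w' k = (2/d) • (u k - v k)
  have hdiff : ∀ k, ‖w k - w' k‖ = 2 / d * ‖u k - v k‖ := by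
    intro k
    have : w k - w' k = (2 / d : ℝ) • (u k - v k) := by
      rw [hw, hw']
      match_scalars <;> (field_simp; try norm_num)
    rw [this, norm_smul, Real.norm_eq_abs, abs_of_pos (by positivity : (0:ℝ) < 2 / d)]
  have huv0 : Tendsto (fun k => ‖u k - v k‖) atTop (nhds 0) := by
    have h2 : Tendsto (fun k => d / 2 * ‖w k - w' k‖) atTop (nhds 0) := by
      simpa using hmain.const_mul (d / 2)
    have : (fun k => d / 2 * ‖w k - w' k‖) = fun k => ‖u k - v k‖ := by
      funext k; rw [hdiff k]; field_simp
    rwa [this] at h2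
  have : ∀ᶠ k in atTop, ‖u k - v k‖ < ε / 2 :=
    huv0.eventually (eventually_lt_nhds (by linarith : (0:ℝ) < ε / 2))
  obtain ⟨k, hk⟩ := this.exists
  have := huv k
  rw [dist_eq_norm] at this
  linarith
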